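/- arXiv:2512.19371 — 2 statements merged into one kernel-verified Lean document; each statement's English description precedes it below -/
import Mathlib

section
/- Let q = 2^m with m ≥ 3, e with gcd(e, m) = 1, σ = 2^e. The matrix M_{a,b,c,d} associated to M ∈ GL(2, F_q) (as in the lifted action) is invertible; that is, the map GL(2, F_q) → GL(4, F_q), M ↦ M_{a,b,c,d}, lands in invertible matrices and induces a group homomorphism PGL(2, F_q) → PGL(4, F_q) which is injective. -/
open Matrix

/-- The lifted 4×4 matrix `M_{a,b,c,d}` associated to `[[a,b],[c,d]]` and `σ`. -/
def liftMat {F : Type*} [Field F] (σ : ℕ) (a b c d : F) : Matrix (Fin 4) (Fin 4) F :=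
  !![a ^ (σ + 1), a ^ σ * b, a * b ^ σ, b ^ (σ + 1);
     a ^ σ * c, a ^ σ * d, b ^ σ * c, b ^ σ * d;
     a * c ^ σ, b * c ^ σ, a * d ^ σ, b * d ^ σ;
     c ^ (σ + 1), c ^ σ * d, c * d ^ σ, d ^ (σ + 1)]

/-- The center of `GL n F` consists exactly of the (invertible) scalar matrices. -/
lemma mem_center_GL_iff {n : Type*} [DecidableEq n] [Fintype n] [Nontrivial n]
    {F : Type*} [Field F] (A : GL n F) :
    A ∈ Subgroup.center (GL n F) ↔ ∃ r : F, (A : Matrix n n F) = r • (1 : Matrix n n F) := by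
  constructor
  · intro h
    have h' := Subgroup.mem_center_iff.mp h
    -- A commutes with every elementary matrix 1 + E i j (i ≠ j)
    have key : ∀ i j : n, i ≠ j →
        Matrix.single i j (1 : F) * (A : Matrix n n F)
          = (A : Matrix n n F) * Matrix.single i j (1 : F) := by
      intro i j hij
      set E := Matrix.single i j (1 : F) with hE
      have hEE : E * E = 0 := Matrix.single_mul_single_of_ne (1 : F) i j i (Ne.symm hij) 1
      have hU : ((1 : Matrix n n F) + E) * (1 - E) = 1 := by
        have h1 : (1 + E) * (1 - E) = 1 + E - E - E * E := by noncomm_ring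
        rw [h1, hEE, sub_zero, add_sub_cancel_right]
      have hU' : ((1 : Matrix n n F) - E) * (1 + E) = 1 := by
        have h1 : (1 - E) * (1 + E) = 1 + E - E - E * E := by noncomm_ring
        rw [h1, hEE, sub_zero, add_sub_cancel_right]
      let U : GL n F := ⟨1 + E, 1 - E, hU, hU'⟩
      have := congrArg Units.val (h' U)
      simp only [Units.val_mul] at this
      have h2 : ((1 : Matrix n n F) + E) * (A : Matrix n n F)
          = (A : Matrix n n F) * (1 + E) := this
      rw [add_mul, mul_add, one_mul, mul_one] at h2
      exact add_left_cancel h2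
    obtain ⟨i₀, j₀, hij₀⟩ := exists_pair_ne n
    refine ⟨(A : Matrix n n F) i₀ i₀, ?_⟩
    have entry : ∀ (i j k l : n), i ≠ j →
        (if k = i then (A : Matrix n n F) j l else 0)
          = (if l = j then (A : Matrix n n F) k i else 0) := by
      intro i j k l hij
      have := congrFun (congrFun (key i j hij) k) l
      simpa [Matrix.single_mul_apply_same,
        Matrix.mul_single_apply_same, Matrix.mul_apply,
        Matrix.single, ite_and, Finset.sum_ite_eq, Finset.sum_ite_eq',
        eq_comm] using this
    have offdiag : ∀ j l : n, j ≠ l → (A : Matrix n n F) j l = 0 := by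
      intro j l hjl
      obtain ⟨i, hi⟩ : ∃ i, i ≠ j := ⟨l, Ne.symm hjl⟩
      have h := entry i j i l hi
      simp only [if_pos rfl] at h
      rw [if_neg hjl.symm] at h
      exact h
    have diag : ∀ j : n, (A : Matrix n n F) j j = (A : Matrix n n F) i₀ i₀ := by
      intro j
      by_cases hj : j = i₀
      · rw [hj]
      · have h := entry i₀ j i₀ j (Ne.symm hj)
        simp only [if_pos rfl] at h
        exact h
    ext k l
    by_cases hkl : k = l
    · subst hkl; simp [diag k, Matrix.one_apply]
    · simp [offdiag k l hkl, Matrix.one_apply, hkl]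
  · rintro ⟨r, hr⟩
    refine Subgroup.mem_center_iff.mpr fun B => ?_
    ext : 1
    simp only [Units.val_mul, hr]
    rw [Matrix.mul_smul, Matrix.smul_mul, Matrix.mul_one, Matrix.one_mul]

/-- For `q = 2^m`, `m ≥ 3`, `gcd(e, m) = 1`, `σ = 2^e`, the matrix
`M_{a,b,c,d}` associated to an invertible `M` is invertible, and `M ↦ M_{a,b,c,d}`
yields a group homomorphism `GL(2, F_q) → GL(4, F_q)` which sends the center to
the center and nothing else to it, i.e. induces an injective homomorphism
`PGL(2, F_q) → PGL(4, F_q)`. -/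
theorem stmt8 (m : ℕ) (hm : 3 ≤ m) (q : ℕ) (hq : q = 2 ^ m)
    (e : ℕ) (he : Nat.gcd e m = 1) (σ : ℕ) (hσ : σ = 2 ^ e)
    (F : Type*) [Field F] [Fintype F] (hF : Fintype.card F = q) :
    (∀ a b c d : F, a * d - b * c ≠ 0 → IsUnit (liftMat σ a b c d)) ∧
    ∃ Φ : GL (Fin 2) F →* GL (Fin 4) F,
      (∀ M : GL (Fin 2) F,
          (Φ M : Matrix (Fin 4) (Fin 4) F) =
            liftMat σ (M.val 0 0) (M.val 0 1) (M.val 1 0) (M.val 1 1)) ∧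
      (∀ M : GL (Fin 2) F,
          Φ M ∈ Subgroup.center (GL (Fin 4) F) ↔ M ∈ Subgroup.center (GL (Fin 2) F)) := by
  -- characteristic 2
  have hchar2 : ringChar F = 2 := by
    rw [FiniteField.even_card_iff_char_two, hF, hq]
    exact Nat.pow_mod 2 m 2 ▸ by
      have : m ≠ 0 := by omega
      simp [Nat.pow_mod, this]
  haveI : CharP F 2 := hchar2 ▸ ringChar.charP F
  haveI : ExpChar F 2 := ExpChar.prime Nat.prime_two
  -- the Frobenius twist x ↦ x^σ
  set frob : F →+* F := iterateFrobenius F 2 e with hfrob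
  have hfrobapp : ∀ x : F, frob x = x ^ σ := by
    intro x; rw [hσ, hfrob]; exact iterateFrobenius_def 2 e x
  -- index equivalence Fin 4 ≃ Fin 2 × Fin 2
  let e4 : Fin 4 ≃ Fin 2 × Fin 2 :=
    ⟨![(0,0),(0,1),(1,0),(1,1)], fun p => ![![0,1],![2,3]] p.1 p.2, by decide, by decide⟩
  -- the lifting monoid hom on matrices
  let liftHom : Matrix (Fin 2) (Fin 2) F →* Matrix (Fin 4) (Fin 4) F :=
    { toFun := fun M => (Matrix.kroneckerMap (· * ·) (M.map frob) M).submatrix e4 e4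
      map_one' := by
        show (Matrix.kroneckerMap (· * ·) ((1 : Matrix (Fin 2) (Fin 2) F).map frob)
          (1 : Matrix (Fin 2) (Fin 2) F)).submatrix e4 e4 = 1
        rw [Matrix.map_one frob (map_zero frob) (map_one frob),
          Matrix.kroneckerMap_one_one _ (fun b => zero_mul b) (fun a => mul_zero a) (one_mul 1),
          Matrix.submatrix_one_equiv]
      map_mul' := by
        intro M N
        show (Matrix.kroneckerMap (· * ·) ((M * N).map frob) (M * N)).submatrix e4 e4 = _
        rw [Matrix.map_mul]
        rw [Matrix.mul_kronecker_mul]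
        rw [← Matrix.submatrix_mul_equiv _ _ _ e4 _] }
  have key : ∀ M : Matrix (Fin 2) (Fin 2) F,
      liftHom M = liftMat σ (M 0 0) (M 0 1) (M 1 0) (M 1 1) := by
    intro M
    show (Matrix.kroneckerMap (· * ·) (M.map frob) M).submatrix e4 e4 = _
    ext i j
    fin_cases i <;> fin_cases j <;>
      simp [liftMat, Matrix.kroneckerMap_apply, Matrix.map_apply, e4, hfrobapp] <;>
      ring
  have unit_aux : ∀ a b c d : F, a * d - b * c ≠ 0 → IsUnit (liftMat σ a b c d) := by
    intro a b c d h
    have hM : IsUnit (!![a, b; c, d]) := by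
      rw [Matrix.isUnit_iff_isUnit_det, Matrix.det_fin_two_of, isUnit_iff_ne_zero]
      exact h
    have := hM.map liftHom
    rwa [key, show (!![a,b;c,d] : Matrix (Fin 2) (Fin 2) F) 0 0 = a by simp,
      show (!![a,b;c,d] : Matrix (Fin 2) (Fin 2) F) 0 1 = b by simp,
      show (!![a,b;c,d] : Matrix (Fin 2) (Fin 2) F) 1 0 = c by simp,
      show (!![a,b;c,d] : Matrix (Fin 2) (Fin 2) F) 1 1 = d by simp] at this
  refine ⟨unit_aux, Units.map liftHom, fun M => ?_, fun M => ?_⟩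
  · exact key M.val
  · rw [mem_center_GL_iff, mem_center_GL_iff]
    have hΦval : ((Units.map liftHom M : GL (Fin 4) F) : Matrix (Fin 4) (Fin 4) F)
        = liftMat σ (M.val 0 0) (M.val 0 1) (M.val 1 0) (M.val 1 1) := key M.val
    rw [hΦval]
    set a := M.val 0 0
    set b := M.val 0 1
    set c := M.val 1 0
    set d := M.val 1 1
    have hdet : a * d - b * c ≠ 0 := by
      have : IsUnit (M.val.det) := (Matrix.isUnit_iff_isUnit_det _).mp M.isUnit
      rw [Matrix.det_fin_two M.val] at this
      exact isUnit_iff_ne_zero.mp this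
    constructor
    · rintro ⟨r, hr⟩
      have ent : ∀ i j : Fin 4, liftMat σ a b c d i j = (r • (1 : Matrix (Fin 4) (Fin 4) F)) i j :=
        fun i j => by rw [hr]
      have hb : b = 0 := by
        have := ent 0 3
        simp [liftMat, Matrix.one_apply, pow_eq_zero_iff] at this
        exact this
      have hc : c = 0 := by
        have := ent 3 0
        simp [liftMat, Matrix.one_apply, pow_eq_zero_iff] at this
        exact this
      have ha : a ≠ 0 := by
        intro h0
        apply hdet
        rw [h0, hb, zero_mul, zero_mul, sub_zero]
      have h00 := ent 0 0
      have h11 := ent 1 1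
      simp [liftMat, Matrix.one_apply] at h00 h11
      have had : a = d := by
        have : a ^ σ * a = a ^ σ * d := by
          rw [← pow_succ a σ, h00, h11]
        exact mul_left_cancel₀ (pow_ne_zero σ ha) this
      refine ⟨a, ?_⟩
      have hMval : M.val = Matrix.of ![![a, b], ![c, d]] := by
        ext i j; fin_cases i <;> fin_cases j <;> rfl
      rw [hMval, hb, hc, ← had]
      ext i j; fin_cases i <;> fin_cases j <;> simp [Matrix.one_apply]
    · rintro ⟨s, hs⟩
      have ha : a = s := by
        have := congrFun (congrFun hs 0) 0
        simpa [Matrix.one_apply] using this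
      have hd : d = s := by
        have := congrFun (congrFun hs 1) 1
        simpa [Matrix.one_apply] using this
      have hb : b = 0 := by
        have := congrFun (congrFun hs 0) 1
        simpa [Matrix.one_apply] using this
      have hc : c = 0 := by
        have := congrFun (congrFun hs 1) 0
        simpa [Matrix.one_apply] using this
      have hσ0 : σ ≠ 0 := by simp [hσ]
      refine ⟨s ^ (σ + 1), ?_⟩
      ext i j
      fin_cases i <;> fin_cases j <;>
        simp [liftMat, ha, hd, hb, hc, Matrix.one_apply, hσ0] <;>
        first
          | ring1
          | rfl
          | simp [Matrix.vecHead, Matrix.vecTail]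
end

section
/- Let q = 2^m with m ≥ 3 and n = q + 1. Suppose k ≡ ±2^e (mod n) for some integer e ≥ 1 with gcd(e, m) = 1. Then for all pairwise distinct x, y, z, w ∈ U_{q+1} ⊂ F_{q²}^×, the cross-ratio identity CR(x^k, y^k; z^k, w^k) = CR(x, y; z, w)^{2^e} holds; in particular, since CR(x,y;z,w) ∈ F_q \ {0,1} and the fixed field of t ↦ t^{2^e} in F_{2^m} is F_2, there are no pairwise distinct x, y, z, w ∈ U_{q+1} with CR(x, y; z, w) = CR(x^k, y^k; z^k, w^k). -/
/-- The cross-ratio `CR(x, y; z, w) = ((x-z)(y-w))/((x-w)(y-z))`. -/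
def crossRatio {K : Type*} [Field K] (x y z w : K) : K :=
  ((x - z) * (y - w)) / ((x - w) * (y - z))

section Aux

variable {K : Type*} [Field K]

lemma crossRatio_map (φ : K →+* K) (x y z w : K) :
    crossRatio (φ x) (φ y) (φ z) (φ w) = φ (crossRatio x y z w) := by
  simp only [crossRatio, map_div₀, map_mul, map_sub]

lemma crossRatio_inv (x y z w : K) (hx : x ≠ 0) (hy : y ≠ 0) (hz : z ≠ 0) (hw : w ≠ 0)
    (hxw : x ≠ w) (hyz : y ≠ z) :
    crossRatio x⁻¹ y⁻¹ z⁻¹ w⁻¹ = crossRatio x y z w := by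
  have h1 : x - w ≠ 0 := sub_ne_zero.mpr hxw
  have h2 : y - z ≠ 0 := sub_ne_zero.mpr hyz
  have h3 : x⁻¹ - w⁻¹ ≠ 0 := sub_ne_zero.mpr fun h => hxw (inv_injective h)
  have h4 : y⁻¹ - z⁻¹ ≠ 0 := sub_ne_zero.mpr fun h => hyz (inv_injective h)
  rw [crossRatio, crossRatio, div_eq_div_iff (mul_ne_zero h3 h4) (mul_ne_zero h1 h2)]
  field_simp
  ring

lemma pow_mod_aux {M : Type*} [Monoid M] {u : M} {n : ℕ} (h : u ^ n = 1) (a : ℕ) :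
    u ^ a = u ^ (a % n) := by
  conv_lhs => rw [← Nat.div_add_mod a n]
  rw [pow_add, pow_mul, h, one_pow, one_mul]

lemma iter_pow {M : Type*} [Monoid M] (t : M) (c : ℕ) (h : t ^ 2 ^ c = t) :
    ∀ j, t ^ 2 ^ (c * j) = t := by
  intro j
  induction j with
  | zero => simp
  | succ j ih => rw [Nat.mul_succ, pow_add, pow_mul, ih, h]

end Aux

/-- Let `q = 2^m`, `m ≥ 3`, `n = q + 1`, and suppose
`k ≡ ±2^e (mod n)` with `e ≥ 1`, `gcd(e, m) = 1`. Then for all pairwise distinct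
`x, y, z, w ∈ U_{q+1} ⊂ F_{q²}^×` one has
`CR(x^k, y^k; z^k, w^k) = CR(x, y; z, w)^{2^e}`; in particular there are no
pairwise distinct `x, y, z, w ∈ U_{q+1}` with
`CR(x, y; z, w) = CR(x^k, y^k; z^k, w^k)`. -/
theorem stmt19 (m : ℕ) (hm : 3 ≤ m) (q n : ℕ) (hq : q = 2 ^ m) (hn : n = q + 1)
    (K : Type*) [Field K] [Fintype K] (hK : Fintype.card K = q ^ 2)
    (k e : ℕ) (he1 : 1 ≤ e) (he : Nat.gcd e m = 1)
    (hk : (k : ZMod n) = 2 ^ e ∨ (k : ZMod n) = -(2 ^ e)) :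
    (∀ x y z w : K, x ^ n = 1 → y ^ n = 1 → z ^ n = 1 → w ^ n = 1 →
      x ≠ y → x ≠ z → x ≠ w → y ≠ z → y ≠ w → z ≠ w →
      crossRatio (x ^ k) (y ^ k) (z ^ k) (w ^ k) = (crossRatio x y z w) ^ (2 ^ e)) ∧
    ¬∃ x y z w : K, x ^ n = 1 ∧ y ^ n = 1 ∧ z ^ n = 1 ∧ w ^ n = 1 ∧
      x ≠ y ∧ x ≠ z ∧ x ≠ w ∧ y ≠ z ∧ y ≠ w ∧ z ≠ w ∧
      crossRatio x y z w = crossRatio (x ^ k) (y ^ k) (z ^ k) (w ^ k) := by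
  have hn0 : n ≠ 0 := by
    have : 0 < 2 ^ m := Nat.pow_pos (n := m) (by norm_num)
    omega
  -- char K = 2
  have hchar : CharP K 2 := by
    obtain ⟨p, hpinst⟩ := CharP.exists K
    haveI := hpinst
    have hp : p.Prime := CharP.char_is_prime K p
    obtain ⟨d, _, hcard⟩ := FiniteField.card K p
    have hdvd : p ∣ 2 ^ (m * 2) := by
      have : p ∣ p ^ (d : ℕ) := dvd_pow_self p d.ne_zero
      rw [← hcard, hK, hq, ← pow_mul] at this
      exact this
    have hp2 : p = 2 := by
      have := hp.dvd_of_dvd_pow hdvd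
      exact (Nat.prime_dvd_prime_iff_eq hp Nat.prime_two).mp this
    rwa [hp2] at hpinst
  haveI := hchar
  haveI : ExpChar K 2 := ExpChar.prime Nat.prime_two
  -- Frobenius facts
  have frob : ∀ (c : ℕ) (x y z w : K),
      crossRatio (x ^ 2 ^ c) (y ^ 2 ^ c) (z ^ 2 ^ c) (w ^ 2 ^ c)
        = (crossRatio x y z w) ^ 2 ^ c := by
    intro c x y z w
    have := crossRatio_map (iterateFrobenius K 2 c) x y z w
    simpa [iterateFrobenius_def] using this
  have frobinj : ∀ (c : ℕ) (a b : K), a ^ 2 ^ c = b ^ 2 ^ c → a = b := by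
    intro c a b hab
    exact (iterateFrobenius K 2 c).injective hab
  -- main first part
  have main : ∀ x y z w : K, x ^ n = 1 → y ^ n = 1 → z ^ n = 1 → w ^ n = 1 →
      x ≠ y → x ≠ z → x ≠ w → y ≠ z → y ≠ w → z ≠ w →
      crossRatio (x ^ k) (y ^ k) (z ^ k) (w ^ k) = (crossRatio x y z w) ^ (2 ^ e) := by
    intro x y z w hx hy hz hw hxy hxz hxw hyz hyw hzw
    have hx0 : x ≠ 0 := fun h => by simp [h, zero_pow hn0] at hx
    have hy0 : y ≠ 0 := fun h => by simp [h, zero_pow hn0] at hy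
    have hz0 : z ≠ 0 := fun h => by simp [h, zero_pow hn0] at hz
    have hw0 : w ≠ 0 := fun h => by simp [h, zero_pow hn0] at hw
    rcases hk with hk | hk
    · -- k ≡ 2^e
      have hmod : k ≡ 2 ^ e [MOD n] := by
        rw [← ZMod.natCast_eq_natCast_iff]
        push_cast
        exact hk
      have key : ∀ u : K, u ^ n = 1 → u ^ k = u ^ 2 ^ e := by
        intro u hu
        rw [pow_mod_aux hu k, pow_mod_aux hu (2 ^ e), hmod]
      rw [key x hx, key y hy, key z hz, key w hw, frob]
    · -- k ≡ -2^e
      have hdvd : n ∣ k + 2 ^ e := by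
        rw [← ZMod.natCast_eq_zero_iff]
        push_cast
        rw [hk]
        ring
      have key : ∀ u : K, u ^ n = 1 → u ^ k = (u ^ 2 ^ e)⁻¹ := by
        intro u hu
        have h1 : u ^ (k + 2 ^ e) = 1 := by
          obtain ⟨d, hd⟩ := hdvd
          rw [hd, pow_mul, hu, one_pow]
        rw [pow_add] at h1
        exact eq_inv_of_mul_eq_one_left h1
      rw [key x hx, key y hy, key z hz, key w hw,
        crossRatio_inv _ _ _ _ (pow_ne_zero _ hx0) (pow_ne_zero _ hy0)
          (pow_ne_zero _ hz0) (pow_ne_zero _ hw0)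
          (fun h => hxw (frobinj e x w h)) (fun h => hyz (frobinj e y z h)), frob]
  refine ⟨main, ?_⟩
  rintro ⟨x, y, z, w, hx, hy, hz, hw, hxy, hxz, hxw, hyz, hyw, hzw, heq⟩
  have hx0 : x ≠ 0 := fun h => by simp [h, zero_pow hn0] at hx
  have hy0 : y ≠ 0 := fun h => by simp [h, zero_pow hn0] at hy
  have hz0 : z ≠ 0 := fun h => by simp [h, zero_pow hn0] at hz
  have hw0 : w ≠ 0 := fun h => by simp [h, zero_pow hn0] at hw
  set t := crossRatio x y z w with ht
  have hxz' : x - z ≠ 0 := sub_ne_zero.mpr hxz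
  have hyw' : y - w ≠ 0 := sub_ne_zero.mpr hyw
  have hxw' : x - w ≠ 0 := sub_ne_zero.mpr hxw
  have hyz' : y - z ≠ 0 := sub_ne_zero.mpr hyz
  have ht0 : t ≠ 0 := div_ne_zero (mul_ne_zero hxz' hyw') (mul_ne_zero hxw' hyz')
  have ht1 : t ≠ 1 := by
    intro h
    rw [ht, crossRatio, div_eq_one_iff_eq (mul_ne_zero hxw' hyz')] at h
    have hxyzw : (x - y) * (z - w) = 0 := by linear_combination h
    rcases mul_eq_zero.mp hxyzw with h' | h'
    · exact hxy (sub_eq_zero.mp h')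
    · exact hzw (sub_eq_zero.mp h')
  -- t = t^(2^e)
  have hte : t ^ 2 ^ e = t :=
    (heq.trans (main x y z w hx hy hz hw hxy hxz hxw hyz hyw hzw)).symm
  -- t = t^(2^m)
  have hqinv : ∀ u : K, u ^ n = 1 → u ^ 2 ^ m = u⁻¹ := by
    intro u hu
    refine eq_inv_of_mul_eq_one_left ?_
    rw [← pow_succ, show 2 ^ m + 1 = n by omega, hu]
  have htm : t ^ 2 ^ m = t := by
    have h1 := frob m x y z w
    rw [hqinv x hx, hqinv y hy, hqinv z hz, hqinv w hw,
      crossRatio_inv x y z w hx0 hy0 hz0 hw0 hxw hyz] at h1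
    exact h1.symm
  -- Bezout: e * a ≡ 1 mod m
  obtain ⟨a, -, ha⟩ := Nat.exists_mul_mod_eq_one_of_coprime he (by omega)
  have hdiv : m * (e * a / m) + 1 = e * a := by
    conv_rhs => rw [← Nat.div_add_mod (e * a) m]
    rw [ha]
  have h1 : t ^ 2 ^ (e * a) = t := iter_pow t e hte a
  have h2 : t ^ 2 ^ (m * (e * a / m)) = t := iter_pow t m htm (e * a / m)
  have ht2 : t ^ 2 = t := by
    calc t ^ 2 = (t ^ 2 ^ (m * (e * a / m))) ^ 2 := by rw [h2]
      _ = t ^ (2 ^ (m * (e * a / m)) * 2) := (pow_mul t _ 2).symm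
      _ = t ^ 2 ^ (m * (e * a / m) + 1) := by rw [pow_succ]
      _ = t ^ 2 ^ (e * a) := by rw [hdiv]
      _ = t := h1
  have : t * (t - 1) = 0 := by linear_combination ht2
  rcases mul_eq_zero.mp this with h' | h'
  · exact ht0 h'
  · exact ht1 (sub_eq_zero.mp h')
end
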